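/- Quadratic-form comparison under a rank-one update: let λ > 0, let P be a symmetric positive semidefinite real d×d matrix, set Z = λI_d + P, and let x ∈ ℝ^d with ‖x‖₂ ≤ R and N ≥ 0 a real number. Then xᵀZ⁻¹x ≤ ((λ + N·R²)/λ)·xᵀ(Z + N·x xᵀ)⁻¹x. -/

import Mathlib

open Matrix

lemma vmv_mulVec {d : ℕ} (x v : Fin d → ℝ) :
    (Matrix.vecMulVec x x).mulVec v = (x ⬝ᵥ v) • x := by
  ext i
  simp [mulVec, dotProduct, vecMulVec_apply, Finset.sum_mul, Finset.mul_sum]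
  congr 1; ext j; ring

theorem quadratic_form_rank_one_comparison
    (d : ℕ) (lam R N : ℝ) (hlam : 0 < lam) (hN : 0 ≤ N)
    (P : Matrix (Fin d) (Fin d) ℝ) (hP : P.PosSemidef)
    (Z : Matrix (Fin d) (Fin d) ℝ)
    (hZ : Z = lam • (1 : Matrix (Fin d) (Fin d) ℝ) + P)
    (x : Fin d → ℝ) (hx : Real.sqrt (∑ j, (x j) ^ 2) ≤ R) :
    x ⬝ᵥ Z⁻¹.mulVec x
      ≤ ((lam + N * R ^ 2) / lam)
          * (x ⬝ᵥ (Z + N • Matrix.vecMulVec x x)⁻¹.mulVec x) := by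
  have hPt : Pᵀ = P := by
    have := hP.1.eq
    rwa [show Pᴴ = Pᵀ by ext i j; simp [conjTranspose_apply]] at this
  have hdp_nonneg : ∀ v : Fin d → ℝ, 0 ≤ v ⬝ᵥ v := fun v =>
    Finset.sum_nonneg fun i _ => mul_self_nonneg (v i)
  have hZpd : Z.PosDef := by
    subst hZ
    refine posDef_iff_dotProduct_mulVec.mpr ⟨?_, fun v hv => ?_⟩
    · show _ᴴ = _
      simp [conjTranspose_add, conjTranspose_smul, hPt]
    · have h1 : 0 < v ⬝ᵥ v := by
        rcases lt_or_eq_of_le (hdp_nonneg v) with h | h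
        · exact h
        · exact absurd (dotProduct_self_eq_zero.mp h.symm) hv
      have h2 := hP.dotProduct_mulVec_nonneg v
      simp only [star_trivial] at h2 ⊢
      rw [add_mulVec, smul_mulVec, one_mulVec, dotProduct_add, dotProduct_smul]
      have : 0 < lam * (v ⬝ᵥ v) := mul_pos hlam h1
      simpa [smul_eq_mul] using add_pos_of_pos_of_nonneg this h2
  have hvmvt : (Matrix.vecMulVec x x)ᵀ = Matrix.vecMulVec x x := by
    ext i j; simp [vecMulVec_apply, mul_comm]
  have hxxpsd : (Matrix.vecMulVec x x).PosSemidef := by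
    refine posSemidef_iff_dotProduct_mulVec.mpr ⟨?_, fun v => ?_⟩
    · show _ᴴ = _
      ext i j; simp [conjTranspose_apply, vecMulVec_apply, mul_comm]
    · simp only [star_trivial]
      rw [vmv_mulVec, dotProduct_smul, smul_eq_mul, dotProduct_comm]
      exact mul_self_nonneg _
  have hWpd : (Z + N • Matrix.vecMulVec x x).PosDef := by
    refine hZpd.add_posSemidef ?_
    refine posSemidef_iff_dotProduct_mulVec.mpr ⟨?_, fun v => ?_⟩
    · show _ᴴ = _
      simp [conjTranspose_smul, hvmvt]
    · rw [smul_mulVec, dotProduct_smul, smul_eq_mul]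
      exact mul_nonneg hN (hxxpsd.dotProduct_mulVec_nonneg v)
  set W := Z + N • Matrix.vecMulVec x x with hW
  set s := x ⬝ᵥ Z⁻¹.mulVec x with hsdef
  set y := Z⁻¹.mulVec x with hydef
  have hZZ : Z * Z⁻¹ = 1 :=
    mul_nonsing_inv Z ((Matrix.isUnit_iff_isUnit_det Z).mp hZpd.isUnit)
  have hWW' : W⁻¹ * W = 1 :=
    nonsing_inv_mul W ((Matrix.isUnit_iff_isUnit_det W).mp hWpd.isUnit)
  have hZy : Z.mulVec y = x := by
    rw [hydef, mulVec_mulVec, hZZ, one_mulVec]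
  have hs0 : 0 ≤ s := by simpa [star_trivial] using hZpd.inv.posSemidef.dotProduct_mulVec_nonneg x
  have hR0 : 0 ≤ R := le_trans (Real.sqrt_nonneg _) hx
  have hxR : x ⬝ᵥ x ≤ R ^ 2 := by
    have h1 : x ⬝ᵥ x = ∑ j, (x j) ^ 2 := by simp [dotProduct, sq]
    rw [h1]
    nlinarith [Real.sq_sqrt (Finset.sum_nonneg (fun i (_ : i ∈ Finset.univ) => sq_nonneg (x i))),
      Real.sqrt_nonneg (∑ j, (x j) ^ 2), hx]
  have hsy : s = x ⬝ᵥ y := rfl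
  have hyZy : s = y ⬝ᵥ Z.mulVec y := by
    rw [hsy, ← hZy, dotProduct_comm]
  have hlamy : lam * (y ⬝ᵥ y) ≤ s := by
    rw [hyZy, hZ, add_mulVec, smul_mulVec, one_mulVec, dotProduct_add, dotProduct_smul,
      smul_eq_mul]
    have := hP.dotProduct_mulVec_nonneg y
    simp only [star_trivial] at this
    linarith
  have hCS : s ^ 2 ≤ (x ⬝ᵥ x) * (y ⬝ᵥ y) := by
    have h := Finset.sum_mul_sq_le_sq_mul_sq Finset.univ x y
    have hxx : x ⬝ᵥ x = ∑ i, (x i) ^ 2 := by simp [dotProduct, sq]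
    have hyy : y ⬝ᵥ y = ∑ i, (y i) ^ 2 := by simp [dotProduct, sq]
    rw [hsy, hxx, hyy]
    exact h
  have hy0 : 0 ≤ y ⬝ᵥ y := hdp_nonneg y
  have hs2 : lam * s ^ 2 ≤ R ^ 2 * s := by
    nlinarith [mul_le_mul_of_nonneg_left hCS (le_of_lt hlam), mul_le_mul_of_nonneg_right hxR hy0]
  have hc : 0 < 1 + N * s := by positivity
  have hWy : W.mulVec y = (1 + N * s) • x := by
    rw [hW, add_mulVec, hZy, smul_mulVec, vmv_mulVec, ← hsy]
    ext i
    simp [smul_eq_mul]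
    ring
  have hWinvx : W⁻¹.mulVec x = (1 + N * s)⁻¹ • y := by
    have h1 : W⁻¹.mulVec (W.mulVec y) = y := by
      rw [mulVec_mulVec, hWW', one_mulVec]
    rw [hWy, mulVec_smul] at h1
    rw [← h1, smul_smul, inv_mul_cancel₀ (ne_of_gt hc), one_smul]
  have hkey : x ⬝ᵥ W⁻¹.mulVec x = s / (1 + N * s) := by
    rw [hWinvx, dotProduct_smul, smul_eq_mul, ← hsy, div_eq_inv_mul]
  rw [hkey, div_mul_div_comm, le_div_iff₀ (by positivity)]
  nlinarith [mul_le_mul_of_nonneg_left hs2 hN]
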